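/- A set B is c-accessing in a graph G if and only if the complement V \ B is not 'oddly dominating into B', i.e. it is NOT the case that some C ⊆ V \ B has Odd(C) ⊇ B. Equivalently: exactly one of the two conditions '∃ D ⊆ B, |D| odd, Odd(D) ⊆ B' and '∃ C ⊆ V \ B, B ⊆ Odd(C)' holds. -/

import Mathlib

variable {V : Type*} [Fintype V] [DecidableEq V]

def oddNbhd (G : SimpleGraph V) [DecidableRel G.Adj] (D : Finset V) : Finset V :=
  Finset.univ.filter fun v => Odd (G.neighborFinset v ∩ D).card

def cAccessing (G : SimpleGraph V) [DecidableRel G.Adj] (B : Finset V) : Prop :=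
  ∃ D ⊆ B, Odd D.card ∧ oddNbhd G D ⊆ B

open Matrix Finset

set_option linter.unusedSectionVars false

private lemma zmod2_cases : ∀ a : ZMod 2, a = 0 ∨ a = 1 := by decide

private lemma zmod2_ne_one : ∀ a : ZMod 2, a ≠ 1 ↔ a = 0 := by decide

private lemma odd_iff_cast_one (n : ℕ) : Odd n ↔ (n : ZMod 2) = 1 := by
  rw [Nat.odd_iff]
  constructor
  · intro h; rw [← ZMod.natCast_mod, h]; norm_num
  · intro h; by_contra h2
    have h3 : n % 2 = 0 := by omega
    rw [← ZMod.natCast_mod, h3] at h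
    simp at h

/-- For a vector `x` on the subtype of `S`, its "support" finset in `V`. -/
private def supp (S : Finset V) (x : {v // v ∈ S} → ZMod 2) : Finset V :=
  (S.attach.filter (fun j => x j = 1)).map ⟨Subtype.val, Subtype.val_injective⟩

private lemma supp_subset (S : Finset V) (x : {v // v ∈ S} → ZMod 2) : supp S x ⊆ S := by
  intro w hw
  simp only [supp, mem_map, mem_filter, Function.Embedding.coeFn_mk] at hw
  obtain ⟨j, _, rfl⟩ := hw
  exact j.2

private lemma sum_supp (S : Finset V) (x : {v // v ∈ S} → ZMod 2) (g : V → ZMod 2) :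
    ∑ w ∈ supp S x, g w = ∑ j : {v // v ∈ S}, g j.1 * x j := by
  rw [supp, Finset.sum_map, Finset.sum_filter, Finset.univ_eq_attach]
  apply Finset.sum_congr rfl
  intro j _
  rcases zmod2_cases (x j) with h | h <;> simp [h]

private lemma sum_ind (S D : Finset V) (hD : D ⊆ S) (g : V → ZMod 2) :
    ∑ j : {v // v ∈ S}, g j.1 * (if j.1 ∈ D then 1 else 0) = ∑ w ∈ D, g w := by
  rw [Finset.univ_eq_attach]
  rw [Finset.sum_attach S (fun w => g w * (if w ∈ D then 1 else 0))]
  rw [Finset.sum_congr rfl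
    (fun w _ => by rcases em (w ∈ D) with h | h <;> simp [h] :
      ∀ w ∈ S, g w * (if w ∈ D then 1 else 0) = if w ∈ D then g w else 0)]
  rw [Finset.sum_ite_mem, Finset.inter_eq_right.mpr hD]

/-- Fredholm alternative over a field. -/
private lemma fredholm {F : Type*} [Field F] {m n : Type*} [Fintype m] [Fintype n]
    [DecidableEq m] [DecidableEq n] (M : Matrix m n F) (b : m → F) :
    (∃ x, M.mulVec x = b) ↔ ∀ y, Mᵀ.mulVec y = 0 → y ⬝ᵥ b = 0 := by
  constructor
  · rintro ⟨x, rfl⟩ y hy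
    rw [Matrix.dotProduct_mulVec, ← Matrix.mulVec_transpose, hy, zero_dotProduct]
  · intro h
    have hb : b ∈ LinearMap.range M.mulVecLin := by
      rw [← Subspace.forall_mem_dualAnnihilator_apply_eq_zero_iff]
      intro φ hφ
      set y : m → F := fun i => φ (Pi.single i 1) with hy
      have hφeq : ∀ v : m → F, φ v = y ⬝ᵥ v := by
        intro v
        have hv : v = ∑ i, v i • (Pi.single i 1 : m → F) := by
          ext j
          simp [Pi.single_apply]
        conv_lhs => rw [hv]
        rw [map_sum]
        simp only [_root_.map_smul, smul_eq_mul]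
        simp [dotProduct, hy, mul_comm]
      have hyz : Mᵀ.mulVec y = 0 := by
        ext j
        have h1 : φ (M.mulVec (Pi.single j 1)) = 0 := by
          rw [Submodule.mem_dualAnnihilator] at hφ
          exact hφ _ ⟨Pi.single j 1, rfl⟩
        rw [hφeq] at h1
        have h2 : M.mulVec (Pi.single j 1) = fun i => M i j := by
          ext i
          simp [Matrix.mulVec_single]
        rw [h2] at h1
        simp only [Matrix.mulVec, Matrix.transpose_apply, Pi.zero_apply]
        rw [← h1]
        simp [dotProduct, mul_comm]
      rw [hφeq b]
      exact h y hyz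
    obtain ⟨x, hx⟩ := hb
    exact ⟨x, hx⟩

theorem cAccessing_xor_dominated (G : SimpleGraph V) [DecidableRel G.Adj] (B : Finset V) :
    Xor' (cAccessing G B) (∃ C ⊆ Bᶜ, B ⊆ oddNbhd G C) := by
  classical
  set A : Matrix V V (ZMod 2) := fun v w => if G.Adj v w then 1 else 0 with hA
  have hAsymm : ∀ v w, A v w = A w v := by
    intro v w
    by_cases h : G.Adj v w
    · have h2 : G.Adj w v := h.symm
      simp [hA, h, h2]
    · have h2 : ¬ G.Adj w v := fun h' => h h'.symm
      simp [hA, h, h2]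
  have hodd : ∀ (D : Finset V) (v : V), v ∈ oddNbhd G D ↔ ∑ w ∈ D, A v w = 1 := by
    intro D v
    have h1 : (G.neighborFinset v ∩ D) = D.filter (fun w => G.Adj v w) := by
      ext w; simp [and_comm]
    have h2 : ∑ w ∈ D, A v w = ((D.filter (fun w => G.Adj v w)).card : ZMod 2) := by
      simp only [hA]
      rw [Finset.sum_boole]
    simp only [oddNbhd, mem_filter, mem_univ, true_and, h1, h2, odd_iff_cast_one]
  set M : Matrix {v // v ∈ B} {v // v ∈ Bᶜ} (ZMod 2) := fun i j => A i.1 j.1 with hM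
  -- translate the domination condition
  have h2 : (∃ C ⊆ Bᶜ, B ⊆ oddNbhd G C) ↔
      ∃ x, M.mulVec x = (fun _ => (1 : ZMod 2)) := by
    constructor
    · rintro ⟨C, hC, hB⟩
      refine ⟨fun j => if j.1 ∈ C then 1 else 0, funext fun i => ?_⟩
      show ∑ j : {v // v ∈ Bᶜ}, M i j * (if j.1 ∈ C then 1 else 0) = 1
      simp only [hM]
      rw [sum_ind Bᶜ C hC (A i.1)]
      exact (hodd C i.1).mp (hB i.2)
    · rintro ⟨x, hx⟩
      refine ⟨supp Bᶜ x, supp_subset _ _, fun v hv => ?_⟩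
      rw [hodd, sum_supp Bᶜ x (A v)]
      have h := congrFun hx ⟨v, hv⟩
      simp only [Matrix.mulVec, dotProduct, hM] at h
      exact h
  -- translate the accessing condition
  have h1 : cAccessing G B ↔
      ∃ y, Mᵀ.mulVec y = 0 ∧ ∑ i : {v // v ∈ B}, y i = 1 := by
    constructor
    · rintro ⟨D, hD, hDodd, hDnb⟩
      refine ⟨fun i => if i.1 ∈ D then 1 else 0, ?_, ?_⟩
      · ext j
        simp only [Matrix.mulVec, dotProduct, Matrix.transpose_apply, hM, Pi.zero_apply,
          Matrix.transpose, Matrix.of_apply]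
        have hsw : ∀ i ∈ (Finset.univ : Finset {v // v ∈ B}),
            A i.1 j.1 * (if i.1 ∈ D then 1 else 0)
              = A j.1 i.1 * (if i.1 ∈ D then 1 else 0) := fun i _ => by rw [hAsymm]
        rw [Finset.sum_congr rfl hsw, sum_ind B D hD (A j.1)]
        have hvB : j.1 ∉ B := Finset.mem_compl.mp j.2
        have hno : j.1 ∉ oddNbhd G D := fun hmem => hvB (hDnb hmem)
        rw [hodd] at hno
        exact (zmod2_ne_one _).mp hno
      · have h := sum_ind B D hD (fun _ => (1 : ZMod 2))
        simp only [one_mul] at h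
        rw [h, Finset.sum_const, nsmul_eq_mul, mul_one]
        exact (odd_iff_cast_one _).mp hDodd
    · rintro ⟨y, hy0, hy1⟩
      refine ⟨supp B y, supp_subset _ _, ?_, ?_⟩
      · rw [odd_iff_cast_one]
        have h := sum_supp B y (fun _ => (1 : ZMod 2))
        simp only [one_mul] at h
        rw [Finset.sum_const, nsmul_eq_mul, mul_one] at h
        rw [h, hy1]
      · intro v hv
        by_contra hvB
        have hj : v ∈ Bᶜ := Finset.mem_compl.mpr hvB
        have h0 := congrFun hy0 ⟨v, hj⟩
        simp only [Matrix.mulVec, dotProduct, Matrix.transpose_apply, hM, Pi.zero_apply,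
          Matrix.transpose, Matrix.of_apply] at h0
        have hsw : ∀ i ∈ (Finset.univ : Finset {v // v ∈ B}),
            A v i.1 * y i = A i.1 v * y i := fun i _ => by rw [hAsymm]
        rw [hodd, sum_supp B y (A v), Finset.sum_congr rfl hsw, h0] at hv
        exact one_ne_zero hv.symm
  -- Fredholm alternative
  have hfred := fredholm M (fun _ => (1 : ZMod 2))
  have hdot : ∀ y : {v // v ∈ B} → ZMod 2,
      y ⬝ᵥ (fun _ => (1 : ZMod 2)) = ∑ i, y i := by
    intro y; simp [dotProduct]
  have hQnotP : (∃ C ⊆ Bᶜ, B ⊆ oddNbhd G C) ↔ ¬ cAccessing G B := by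
    rw [h1, h2, hfred]
    push_neg
    constructor
    · intro h y hy0 hsum
      have h' := h y hy0
      rw [hdot, hsum] at h'
      exact one_ne_zero h'
    · intro h y hy0
      rw [hdot]
      exact (zmod2_ne_one _).mp (h y hy0)
  rcases em (cAccessing G B) with hP | hP
  · exact Or.inl ⟨hP, fun hQ => (hQnotP.mp hQ) hP⟩
  · exact Or.inr ⟨hQnotP.mpr hP, hP⟩
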